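/- If G is a digraph with minimum in-degree at least 1 such that ρ°(G) = γ_t(G), then for every digraph H with minimum in-degree at least 1, the total domination number of the direct product satisfies γ_t(G × H) = γ_t(G) · γ_t(H). -/

import Mathlib

open SimpleGraph

variable {V W : Type*}

/-- The closed out-neighborhood of `v` in the digraph with arc relation `A`. -/
def NplusC (A : V → V → Prop) (v : V) : Set V := insert v {u | A v u}

/-- The closed in-neighborhood of `v`. -/
def NminusC (A : V → V → Prop) (v : V) : Set V := insert v {u | A u v}

/-- The open out-neighborhood of `v`. -/
def NplusO (A : V → V → Prop) (v : V) : Set V := {u | A v u}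

/-- The open in-neighborhood of `v`. -/
def NminusO (A : V → V → Prop) (v : V) : Set V := {u | A u v}

/-- `S` is a dominating set: every vertex is in a closed out-neighborhood of a member of `S`. -/
def IsDomSet (A : V → V → Prop) (S : Set V) : Prop := ∀ u, ∃ v ∈ S, u ∈ NplusC A v

/-- The domination number of a digraph. -/
noncomputable def domNum (V : Type*) [Fintype V] (A : V → V → Prop) : ℕ :=
  sInf {n | ∃ S : Set V, IsDomSet A S ∧ S.ncard = n}

/-- `P` is a packing: closed in-neighborhoods of members are pairwise disjoint. -/
def IsPacking (A : V → V → Prop) (P : Set V) : Prop :=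
  P.Pairwise fun x y => Disjoint (NminusC A x) (NminusC A y)

/-- The packing number of a digraph. -/
noncomputable def packNum (V : Type*) [Fintype V] (A : V → V → Prop) : ℕ :=
  sSup {n | ∃ P : Set V, IsPacking A P ∧ P.ncard = n}

/-- `S` is a total dominating set: every vertex has an in-neighbor in `S`. -/
def IsTotalDomSet (A : V → V → Prop) (S : Set V) : Prop := ∀ u, ∃ v ∈ S, A v u

/-- The total domination number of a digraph. -/
noncomputable def totalDomNum (V : Type*) [Fintype V] (A : V → V → Prop) : ℕ :=
  sInf {n | ∃ S : Set V, IsTotalDomSet A S ∧ S.ncard = n}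

/-- `P` is an open packing: open in-neighborhoods of members are pairwise disjoint. -/
def IsOpenPacking (A : V → V → Prop) (P : Set V) : Prop :=
  P.Pairwise fun x y => Disjoint (NminusO A x) (NminusO A y)

/-- The open packing number of a digraph. -/
noncomputable def openPackNum (V : Type*) [Fintype V] (A : V → V → Prop) : ℕ :=
  sSup {n | ∃ P : Set V, IsOpenPacking A P ∧ P.ncard = n}

/-- The underlying (simple) graph of a digraph. -/
def ugr (A : V → V → Prop) : SimpleGraph V := SimpleGraph.fromRel A

/-- A ditree is a digraph whose underlying graph is a tree. -/
def IsDitree (A : V → V → Prop) : Prop := (ugr A).IsTree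

/-- Arc relation of the Cartesian product of two digraphs. -/
def cartArc (A : V → V → Prop) (B : W → W → Prop) : V × W → V × W → Prop :=
  fun p q => (p.1 = q.1 ∧ B p.2 q.2) ∨ (p.2 = q.2 ∧ A p.1 q.1)

/-- Arc relation of the direct product of two digraphs. -/
def dirArc (A : V → V → Prop) (B : W → W → Prop) : V × W → V × W → Prop :=
  fun p q => A p.1 q.1 ∧ B p.2 q.2

/-- The closed in-neighborhood graph of a digraph: distinct vertices are adjacent iff
their closed in-neighborhoods intersect. -/
def Ncg (A : V → V → Prop) : SimpleGraph V :=
  SimpleGraph.fromRel (fun u v => (NminusC A u ∩ NminusC A v).Nonempty)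

/-- The open in-neighborhood graph of a digraph: distinct vertices are adjacent iff
their open in-neighborhoods intersect. -/
def Nog (A : V → V → Prop) : SimpleGraph V :=
  SimpleGraph.fromRel (fun u v => (NminusO A u ∩ NminusO A v).Nonempty)

private theorem exist_tds' {α : Type*} [Fintype α] (C : α → α → Prop) (hd : ∀ v, ∃ u, C u v) :
    ∃ S : Set α, IsTotalDomSet C S ∧ S.ncard = totalDomNum α C := by
  have hne : {n | ∃ S : Set α, IsTotalDomSet C S ∧ S.ncard = n}.Nonempty :=
    ⟨(Set.univ : Set α).ncard, Set.univ, fun u => (hd u).imp (fun v hv => ⟨trivial, hv⟩), rfl⟩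
  obtain ⟨S, hS, hc⟩ := Nat.sInf_mem hne
  exact ⟨S, hS, hc⟩

private theorem tds_le' {α : Type*} [Fintype α] (C : α → α → Prop) (S : Set α)
    (hS : IsTotalDomSet C S) : totalDomNum α C ≤ S.ncard :=
  Nat.sInf_le ⟨S, hS, rfl⟩

theorem stmt3 {V W : Type*} [Fintype V] [Fintype W]
    (A : V → V → Prop) (B : W → W → Prop)
    (hirrA : ∀ v, ¬ A v v) (hirrB : ∀ w, ¬ B w w)
    (hdA : ∀ v : V, ∃ u, A u v) (hdB : ∀ w : W, ∃ u, B u w)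
    (hGP : openPackNum V A = totalDomNum V A) :
    totalDomNum (V × W) (dirArc A B) = totalDomNum V A * totalDomNum W B := by
  classical
  obtain ⟨S, hS, hScard⟩ := exist_tds' A hdA
  obtain ⟨T, hT, hTcard⟩ := exist_tds' B hdB
  have hdAB : ∀ p : V × W, ∃ q, dirArc A B q p := by
    rintro ⟨v, w⟩
    obtain ⟨u, hu⟩ := hdA v
    obtain ⟨x, hx⟩ := hdB w
    exact ⟨(u, x), hu, hx⟩
  obtain ⟨D, hD, hDcard⟩ := exist_tds' (dirArc A B) hdAB
  -- maximum open packing of A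
  obtain ⟨P, hP, hPcard⟩ : ∃ P : Set V, IsOpenPacking A P ∧ P.ncard = openPackNum V A := by
    have hne : {n | ∃ P : Set V, IsOpenPacking A P ∧ P.ncard = n}.Nonempty :=
      ⟨0, ∅, by simp [IsOpenPacking], by simp⟩
    have hbdd : BddAbove {n | ∃ P : Set V, IsOpenPacking A P ∧ P.ncard = n} := by
      refine ⟨Fintype.card V, ?_⟩
      rintro n ⟨Q, -, rfl⟩
      have := Set.ncard_le_ncard (Set.subset_univ Q) Set.finite_univ
      simpa [Set.ncard_univ, Nat.card_eq_fintype_card] using this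
    obtain ⟨Q, hQ, hc⟩ := Nat.sSup_mem hne hbdd
    exact ⟨Q, hQ, hc⟩
  have hPcard' : P.ncard = totalDomNum V A := hPcard.trans hGP
  apply le_antisymm
  · -- upper bound: S ×ˢ T is a total dominating set
    have hST : IsTotalDomSet (dirArc A B) (S ×ˢ T) := by
      rintro ⟨v, w⟩
      obtain ⟨s, hs, hsv⟩ := hS v
      obtain ⟨t, ht, htw⟩ := hT w
      exact ⟨(s, t), ⟨hs, ht⟩, hsv, htw⟩
    have hcard : (S ×ˢ T).ncard = S.ncard * T.ncard := by
      rw [← Nat.card_coe_set_eq, ← Nat.card_coe_set_eq, ← Nat.card_coe_set_eq,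
        Nat.card_congr (Equiv.Set.prod S T), Nat.card_prod]
    calc totalDomNum (V × W) (dirArc A B) ≤ (S ×ˢ T).ncard := tds_le' _ _ hST
      _ = totalDomNum V A * totalDomNum W B := by rw [hcard, hScard, hTcard]
  · -- lower bound
    set k := totalDomNum W B with hk
    set F : V → Set (V × W) := fun v => {p | p ∈ D ∧ A p.1 v} with hF
    have claim1 : ∀ v, k ≤ (F v).ncard := by
      intro v
      have hTDS : IsTotalDomSet B (Prod.snd '' F v) := by
        intro w
        obtain ⟨p, hpD, hA, hB⟩ := hD (v, w)
        exact ⟨p.2, ⟨p, ⟨hpD, hA⟩, rfl⟩, hB⟩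
      calc k ≤ (Prod.snd '' F v).ncard := tds_le' _ _ hTDS
        _ ≤ (F v).ncard := Set.ncard_image_le (F v).toFinite
    have claim2 : ∀ v ∈ P, ∀ v' ∈ P, v ≠ v' → Disjoint (F v) (F v') := by
      intro v hv v' hv' hne
      have h2 : Disjoint (NminusO A v) (NminusO A v') := hP hv hv' hne
      rw [Set.disjoint_left] at h2 ⊢
      rintro p ⟨-, h1⟩ ⟨-, h2'⟩
      exact h2 h1 h2'
    set Pf : Finset V := P.toFinite.toFinset with hPf
    set Ff : V → Finset (V × W) := fun v => (F v).toFinite.toFinset with hFf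
    have hsub : Pf.biUnion Ff ⊆ D.toFinite.toFinset := by
      intro p hp
      rw [Finset.mem_biUnion] at hp
      obtain ⟨v, -, hpv⟩ := hp
      rw [Set.Finite.mem_toFinset] at hpv ⊢
      exact hpv.1
    have hbu : (Pf.biUnion Ff).card = ∑ v ∈ Pf, (Ff v).card := by
      apply Finset.card_biUnion
      intro v hv v' hv' hne
      simp only [Finset.mem_coe] at hv hv'
      rw [hPf, Set.Finite.mem_toFinset] at hv hv'
      exact Set.Finite.disjoint_toFinset.2 (claim2 v hv v' hv' hne)
    have hsum : Pf.card * k ≤ ∑ v ∈ Pf, (Ff v).card := by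
      have := Finset.card_nsmul_le_sum Pf (fun v => (Ff v).card) k
        (fun v _ => le_trans (claim1 v) (le_of_eq (Set.ncard_eq_toFinset_card (F v) (F v).toFinite)))
      simpa [smul_eq_mul] using this
    have hPfcard : Pf.card = P.ncard := (Set.ncard_eq_toFinset_card P P.toFinite).symm
    have hDfcard : D.toFinite.toFinset.card = D.ncard :=
      (Set.ncard_eq_toFinset_card D D.toFinite).symm
    calc totalDomNum V A * k = Pf.card * k := by rw [hPfcard, hPcard']
      _ ≤ ∑ v ∈ Pf, (Ff v).card := hsum
      _ = (Pf.biUnion Ff).card := hbu.symm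
      _ ≤ D.toFinite.toFinset.card := Finset.card_le_card hsub
      _ = totalDomNum (V × W) (dirArc A B) := by rw [hDfcard, hDcard]
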